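/- The shuffle algebra S = ℂ⟨ξ_0,ξ_1⟩ satisfies S = S^{10}[ξ_1, ξ_0], where S^{10} = ℂ∅ ⊕ ξ_0 S ξ_1: every element of S decomposes uniquely as a finite sum Σ_{i,j} ξ_1^{⧢i} ⧢ w_{ij} ⧢ ξ_0^{⧢j} with w_{ij} ∈ S^{10}. -/

import Mathlib

noncomputable section
open scoped BigOperators


/-- The shuffle product of two words (letters: `false` = ξ_0, `true` = ξ_1),
as a formal ℂ-linear combination of words. -/
def sh : List Bool → List Bool → (List Bool →₀ ℂ)
  | [], w => Finsupp.single w 1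
  | a :: w1, [] => Finsupp.single (a :: w1) 1
  | a :: w1, b :: w2 =>
      (sh w1 (b :: w2)).mapDomain (a :: ·) + (sh (a :: w1) w2).mapDomain (b :: ·)
  termination_by w1 w2 => w1.length + w2.length

/-- The bilinear extension of the shuffle product to S = ℂ⟨ξ_0,ξ_1⟩. -/
def shProd (f g : List Bool →₀ ℂ) : List Bool →₀ ℂ :=
  f.sum fun u cu => g.sum fun v cv => (cu * cv) • sh u v

/-- Iterated shuffle powers. -/
def shPow (f : List Bool →₀ ℂ) : ℕ → (List Bool →₀ ℂ)
  | 0 => Finsupp.single [] 1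
  | n + 1 => shProd f (shPow f n)

/-- The set of words spanning S^0: the empty word and the words ending with ξ_1. -/
def S0words : Set (List Bool) := {l | l = [] ∨ l.getLast? = some true}

/-- The set of words spanning S^{10}: the empty word and the words beginning
with ξ_0 and ending with ξ_1. -/
def S10words : Set (List Bool) :=
  {l | l = [] ∨ (l.head? = some false ∧ l.getLast? = some true)}

/-- The subspace S^0 = ℂ∅ ⊕ Sξ_1 of the shuffle algebra. -/
def S0 : Submodule ℂ (List Bool →₀ ℂ) := Finsupp.supported ℂ ℂ S0words

/-- The subspace S^{10} = ℂ∅ ⊕ ξ_0Sξ_1 of the shuffle algebra. -/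
def S10 : Submodule ℂ (List Bool →₀ ℂ) := Finsupp.supported ℂ ℂ S10words


set_option maxHeartbeats 1000000


abbrev S := List Bool →₀ ℂ

lemma sh_nil_left (w : List Bool) : sh [] w = Finsupp.single w 1 := by cases w <;> rw [sh]

lemma sh_nil_right (w : List Bool) : sh w [] = Finsupp.single w 1 := by cases w <;> rw [sh]

lemma sh_cons_cons (a b : Bool) (w1 w2 : List Bool) :
    sh (a :: w1) (b :: w2) =
      (sh w1 (b :: w2)).mapDomain (a :: ·) + (sh (a :: w1) w2).mapDomain (b :: ·) := by
  rw [sh]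

/-- bilinear shuffle product -/
def Shl : S →ₗ[ℂ] S →ₗ[ℂ] S :=
  Finsupp.lsum ℂ fun u => LinearMap.toSpanSingleton ℂ (S →ₗ[ℂ] S)
    (Finsupp.lsum ℂ fun v => LinearMap.toSpanSingleton ℂ S (sh u v))

@[simp] lemma Shl_single_single (u v : List Bool) (a b : ℂ) :
    Shl (Finsupp.single u a) (Finsupp.single v b) = (a * b) • sh u v := by
  simp [Shl, mul_smul]

lemma shProd_eq (f g : S) : shProd f g = Shl f g := by
  rw [shProd, Shl]
  simp [Finsupp.lsum_apply, Finsupp.sum_apply]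
  congr 1
  ext u cu
  simp [Finsupp.smul_sum, mul_smul]

@[simp] lemma Shl_unit_left (f : S) : Shl (Finsupp.single [] 1) f = f := by
  have : (Shl (Finsupp.single [] 1) : S →ₗ[ℂ] S) = LinearMap.id := by
    apply Finsupp.lhom_ext
    intro v b
    simp [sh_nil_left, Finsupp.smul_single]
  rw [this]; rfl

@[simp] lemma Shl_unit_right (f : S) : Shl f (Finsupp.single [] 1) = f := by
  have : (Shl.flip (Finsupp.single [] 1) : S →ₗ[ℂ] S) = LinearMap.id := by
    apply Finsupp.lhom_ext
    intro v b
    simp [sh_nil_right, Finsupp.smul_single]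
  have h := congrArg (fun φ => φ f) this
  simpa using h

theorem sh_comm (u v : List Bool) : sh u v = sh v u := by
  match u, v with
  | [], v => rw [sh_nil_left, sh_nil_right]
  | a::u, [] => rw [sh_nil_left, sh_nil_right]
  | a::u, b::v =>
    rw [sh_cons_cons, sh_cons_cons, add_comm]
    rw [sh_comm (a::u) v, sh_comm u (b::v)]
  termination_by u.length + v.length
  decreasing_by all_goals (simp [List.length_cons]; try omega)

theorem sh_length {u v w : List Bool} (h : w ∈ (sh u v).support) :
    w.length = u.length + v.length := by
  match u, v with
  | [], v =>
    rw [sh_nil_left] at h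
    have := Finsupp.support_single_subset h
    simp_all
  | a::u, [] =>
    rw [sh_nil_right] at h
    have := Finsupp.support_single_subset h
    simp_all
  | a::u, b::v =>
    rw [sh_cons_cons] at h
    have h2 := Finsupp.support_add h
    simp only [Finset.mem_union] at h2
    rcases h2 with h2 | h2 <;>
    · have h3 := Finsupp.mapDomain_support h2
      simp only [Finset.mem_image] at h3
      obtain ⟨w', hw', rfl⟩ := h3
      have := sh_length hw'
      simp [List.length_cons, this]; omega
  termination_by u.length + v.length
  decreasing_by all_goals (simp [List.length_cons]; try omega)

/-- number of leading `b`'s -/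
def lead (b : Bool) (w : List Bool) : ℕ := (w.takeWhile (· == b)).length

@[simp] lemma lead_nil (b : Bool) : lead b [] = 0 := rfl

lemma lead_cons (b a : Bool) (w : List Bool) :
    lead b (a :: w) = if a == b then lead b w + 1 else 0 := by
  simp only [lead, List.takeWhile_cons]
  split <;> simp

@[simp] lemma lead_cons_self (b : Bool) (w : List Bool) : lead b (b :: w) = lead b w + 1 := by
  simp [lead_cons]

lemma lead_cons_ne (b a : Bool) (w : List Bool) (h : a ≠ b) : lead b (a :: w) = 0 := by
  simp [lead_cons, h]

theorem sh_lead {b : Bool} {u v w : List Bool} (h : w ∈ (sh u v).support) :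
    lead b w ≤ lead b u + lead b v := by
  match u, v with
  | [], v =>
    rw [sh_nil_left] at h
    have := Finsupp.support_single_subset h
    simp_all
  | a::u, [] =>
    rw [sh_nil_right] at h
    have := Finsupp.support_single_subset h
    simp_all
  | a::u, b'::v =>
    rw [sh_cons_cons] at h
    have h2 := Finsupp.support_add h
    simp only [Finset.mem_union] at h2
    rcases h2 with h2 | h2 <;>
    · have h3 := Finsupp.mapDomain_support h2
      simp only [Finset.mem_image] at h3
      obtain ⟨w', hw', rfl⟩ := h3
      have := sh_lead (b := b) hw'
      simp only [lead_cons] at *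
      split_ifs at * <;> omega
  termination_by u.length + v.length
  decreasing_by all_goals (simp [List.length_cons]; try omega)

lemma mapD_comm (x a : Bool) (f : S) :
    ((f.mapDomain (x :: ·)).mapDomain (· ++ [a])) = ((f.mapDomain (· ++ [a])).mapDomain (x :: ·)) := by
  rw [← Finsupp.mapDomain_comp, ← Finsupp.mapDomain_comp]
  congr 1

lemma sh_single_snoc (a b : Bool) (q : List Bool) :
    sh [a] (q ++ [b]) = (sh [a] q).mapDomain (· ++ [b]) + Finsupp.single (q ++ [b] ++ [a]) 1 := by
  induction q with
  | nil =>
    rw [show ([] : List Bool) ++ [b] = [b] from rfl, sh_cons_cons, sh_nil_left, sh_nil_right]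
    simp only [Finsupp.mapDomain_single]
    rw [show a :: [b] = [a] ++ [b] from rfl, show b :: [a] = [b] ++ [a] from rfl, add_comm]
  | cons c q ih =>
    rw [show (c :: q) ++ [b] = c :: (q ++ [b]) from rfl, sh_cons_cons, ih, sh_cons_cons]
    simp only [Finsupp.mapDomain_add, Finsupp.mapDomain_single, sh_nil_left, mapD_comm]
    simp [List.cons_append]
    abel

theorem sh_snoc_snoc (a b : Bool) (p q : List Bool) :
    sh (p ++ [a]) (q ++ [b]) =
      (sh p (q ++ [b])).mapDomain (· ++ [a]) + (sh (p ++ [a]) q).mapDomain (· ++ [b]) := by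
  match p, q with
  | [], q =>
    rw [show ([] : List Bool) ++ [a] = [a] from rfl, sh_single_snoc, sh_nil_left]
    simp [Finsupp.mapDomain_single]
    abel
  | x::p, [] =>
    rw [show ([] : List Bool) ++ [b] = [b] from rfl, sh_nil_right,
      sh_comm ((x::p) ++ [a]) [b], sh_single_snoc, sh_comm [b] (x::p), Finsupp.mapDomain_single]
  | x::p, y::q =>
    have ih1 := sh_snoc_snoc a b p (y::q)
    have ih2 := sh_snoc_snoc a b (x::p) q
    simp only [List.cons_append] at ih1 ih2 ⊢
    rw [sh_cons_cons, ih1, ih2, sh_cons_cons x y p (q ++ [b]), sh_cons_cons x y (p ++ [a]) q]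
    simp only [Finsupp.mapDomain_add, mapD_comm]
    abel
  termination_by p.length + q.length
  decreasing_by all_goals (simp [List.length_cons]; try omega)

theorem sh_reverse (u v : List Bool) :
    (sh u v).mapDomain List.reverse = sh u.reverse v.reverse := by
  match u, v with
  | [], v => rw [sh_nil_left, Finsupp.mapDomain_single, List.reverse_nil, sh_nil_left]
  | a::u, [] => rw [sh_nil_right, Finsupp.mapDomain_single, List.reverse_nil, sh_nil_right]
  | a::u, b::v =>
    rw [sh_cons_cons, Finsupp.mapDomain_add, ← Finsupp.mapDomain_comp, ← Finsupp.mapDomain_comp]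
    have h1 : (List.reverse ∘ (a :: ·)) = ((· ++ [a]) ∘ List.reverse) := by
      funext w; simp
    have h2 : (List.reverse ∘ (b :: ·)) = ((· ++ [b]) ∘ List.reverse) := by
      funext w; simp
    rw [h1, h2, Finsupp.mapDomain_comp, Finsupp.mapDomain_comp,
      sh_reverse u (b::v), sh_reverse (a::u) v,
      List.reverse_cons, List.reverse_cons, sh_snoc_snoc]
  termination_by u.length + v.length
  decreasing_by all_goals (simp [List.length_cons]; try omega)


/-- strip a leading letter `b` -/
def dHw (b : Bool) : List Bool → S
  | (a :: w) => if a = b then Finsupp.single w 1 else 0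
  | [] => 0

def dH (b : Bool) : S →ₗ[ℂ] S :=
  Finsupp.lsum ℂ fun w => LinearMap.toSpanSingleton ℂ S (dHw b w)

@[simp] lemma dH_single (b : Bool) (w : List Bool) (c : ℂ) :
    dH b (Finsupp.single w c) = c • dHw b w := by
  simp [dH]

lemma dH_mapDomain (b c : Bool) (f : S) :
    dH b (f.mapDomain (c :: ·)) = if c = b then f else 0 := by
  induction f using Finsupp.induction_linear with
  | zero => simp
  | add f g hf hg => rw [Finsupp.mapDomain_add, map_add, hf, hg]; split <;> simp
  | single w x =>
    rw [Finsupp.mapDomain_single, dH_single]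
    show x • dHw b (c :: w) = _
    rw [dHw]
    split <;> simp [Finsupp.smul_single]

lemma dH_sh (b : Bool) (u v : List Bool) :
    dH b (sh u v) = Shl (dHw b u) (Finsupp.single v 1) + Shl (Finsupp.single u 1) (dHw b v) := by
  match u, v with
  | [], v =>
    rw [sh_nil_left, dH_single, dHw]
    simp
  | a::u, [] =>
    rw [sh_nil_right, dH_single]
    simp [show dHw b [] = 0 from rfl]
  | a::u, b'::v =>
    rw [sh_cons_cons, map_add, dH_mapDomain, dH_mapDomain]
    rw [show dHw b (a::u) = if a = b then Finsupp.single u 1 else 0 from rfl,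
        show dHw b (b'::v) = if b' = b then Finsupp.single v 1 else 0 from rfl]
    split_ifs <;> simp [Shl_single_single]

lemma dH_Shl (b : Bool) (f g : S) :
    dH b (Shl f g) = Shl (dH b f) g + Shl f (dH b g) := by
  induction f using Finsupp.induction_linear with
  | zero => simp
  | add f f' hf hf' => simp only [map_add, LinearMap.add_apply, hf, hf']; abel
  | single u x =>
    induction g using Finsupp.induction_linear with
    | zero => simp
    | add g g' hg hg' => simp only [map_add, hg, hg']; abel
    | single v y =>
      rw [Shl_single_single, map_smul, dH_sh, dH_single, dH_single]
      simp only [map_smul, LinearMap.smul_apply, smul_add, smul_smul]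
      rw [show Finsupp.single v y = y • Finsupp.single v (1:ℂ) by simp [Finsupp.smul_single],
          show Finsupp.single u x = x • Finsupp.single u (1:ℂ) by simp [Finsupp.smul_single]]
      simp only [map_smul, LinearMap.smul_apply, smul_smul]
      ring_nf

def revL : S →ₗ[ℂ] S := Finsupp.lmapDomain ℂ ℂ List.reverse

@[simp] lemma revL_single (w : List Bool) (c : ℂ) :
    revL (Finsupp.single w c) = Finsupp.single w.reverse c := by
  simp [revL]

@[simp] lemma revL_revL (f : S) : revL (revL f) = f := by
  induction f using Finsupp.induction_linear with
  | zero => simp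
  | add f g hf hg => simp [hf, hg]
  | single w x => simp

lemma revL_Shl (f g : S) : revL (Shl f g) = Shl (revL f) (revL g) := by
  induction f using Finsupp.induction_linear with
  | zero => simp
  | add f f' hf hf' => simp [map_add, hf, hf']
  | single u x =>
    induction g using Finsupp.induction_linear with
    | zero => simp
    | add g g' hg hg' => simp [map_add, hg, hg']
    | single v y =>
      rw [Shl_single_single, map_smul, revL_single, revL_single, Shl_single_single]
      rw [show revL (sh u v) = (sh u v).mapDomain List.reverse from rfl, sh_reverse]

def dT : S →ₗ[ℂ] S := revL ∘ₗ dH false ∘ₗ revL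

lemma dT_Shl (f g : S) : dT (Shl f g) = Shl (dT f) g + Shl f (dT g) := by
  simp only [dT, LinearMap.comp_apply]
  rw [revL_Shl, dH_Shl, map_add, revL_Shl, revL_Shl, revL_revL, revL_revL]

abbrev unitS : S := Finsupp.single [] 1
abbrev x0 : S := Finsupp.single [false] 1
abbrev x1 : S := Finsupp.single [true] 1

lemma dH_apply (b : Bool) (f : S) : dH b f = f.sum fun w c => c • dHw b w := by
  simp [dH, Finsupp.lsum_apply]
  rfl

@[simp] lemma dH_x1 : dH true x1 = unitS := by simp [dHw]
@[simp] lemma dH_true_x0 : dH true x0 = 0 := by simp [dHw]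
@[simp] lemma dT_x0 : dT x0 = unitS := by simp [dT, dHw]
@[simp] lemma dT_x1 : dT x1 = 0 := by simp [dT, dHw]

lemma dH_supported (b : Bool) (f : S) (h : ∀ w ∈ f.support, dHw b w = 0) : dH b f = 0 := by
  rw [dH_apply, Finsupp.sum]
  apply Finset.sum_eq_zero
  intro w hw
  rw [h w hw, smul_zero]

lemma dH_true_of_S10 (f : S) (hf : f ∈ S10) : dH true f = 0 := by
  apply dH_supported
  intro w hw
  have := Finsupp.mem_supported ℂ f |>.mp hf hw
  rcases this with rfl | ⟨h1, _⟩
  · rfl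
  · cases w with
    | nil => rfl
    | cons a t =>
      simp only [List.head?_cons, Option.some.injEq] at h1
      subst h1
      simp [dHw]

lemma dT_of_S10 (f : S) (hf : f ∈ S10) : dT f = 0 := by
  have : dH false (revL f) = 0 := by
    apply dH_supported
    intro w hw
    have hsub := Finsupp.mapDomain_support (f := List.reverse) (s := f)
    have hw' := hsub hw
    simp only [Finset.mem_image] at hw'
    obtain ⟨w0, hw0, rfl⟩ := hw'
    have := Finsupp.mem_supported ℂ f |>.mp hf hw0
    rcases this with rfl | ⟨_, h2⟩
    · rfl
    · rw [← List.head?_reverse] at h2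
      cases hrev : w0.reverse with
      | nil => rfl
      | cons a t =>
        rw [hrev] at h2
        simp only [List.head?_cons, Option.some.injEq] at h2
        subst h2
        simp [dHw]
  simp [dT, this]

lemma shPow_succ' (f : S) (n : ℕ) : shPow f (n + 1) = Shl f (shPow f n) := by
  rw [shPow, shProd_eq]

lemma D_unit_eq_zero (D : S →ₗ[ℂ] S)
    (hder : ∀ f g, D (Shl f g) = Shl (D f) g + Shl f (D g)) : D unitS = 0 := by
  have h := hder unitS unitS
  rw [Shl_unit_left, Shl_unit_left, Shl_unit_right] at h
  exact right_eq_add.mp h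

lemma Shl_comm (f g : S) : Shl f g = Shl g f := by
  induction f using Finsupp.induction_linear with
  | zero => simp
  | add f f' hf hf' => simp [map_add, hf, hf']
  | single u x =>
    induction g using Finsupp.induction_linear with
    | zero => simp
    | add g g' hg hg' => simp [map_add, hg, hg']
    | single v y => rw [Shl_single_single, Shl_single_single, sh_comm, mul_comm]

lemma D_shPow_unit (D : S →ₗ[ℂ] S)
    (hder : ∀ f g, D (Shl f g) = Shl (D f) g + Shl f (D g))
    (x : S) (hx : D x = unitS) (n : ℕ) :
    D (shPow x (n + 1)) = (n + 1) • shPow x n := by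
  induction n with
  | zero =>
    rw [shPow_succ', hder, hx, show shPow x 0 = unitS by rw [shPow], D_unit_eq_zero D hder]
    simp
  | succ n ih =>
    rw [shPow_succ' x (n+1), hder, hx, ih, Shl_unit_left]
    rw [← Nat.cast_smul_eq_nsmul ℂ, map_smul, ← shPow_succ', ← Nat.cast_smul_eq_nsmul ℂ (n+1+1)]
    have h1 : ((n+1+1 : ℕ) : ℂ) = ((n+1:ℕ):ℂ) + 1 := by push_cast; ring
    rw [h1, add_smul, one_smul, add_comm]

lemma D_shPow_zero (D : S →ₗ[ℂ] S)
    (hder : ∀ f g, D (Shl f g) = Shl (D f) g + Shl f (D g))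
    (x : S) (hx : D x = 0) (n : ℕ) :
    D (shPow x n) = 0 := by
  induction n with
  | zero => exact D_unit_eq_zero D hder
  | succ n ih => rw [shPow_succ', hder, hx, ih]; simp

lemma cancel_left (D : S →ₗ[ℂ] S)
    (hder : ∀ f g, D (Shl f g) = Shl (D f) g + Shl f (D g))
    (x : S) (hx : D x = unitS) :
    ∀ (n : ℕ) (y : ℕ → S), (∀ i, D (y i) = 0) →
      (∑ i ∈ Finset.range (n + 1), Shl (shPow x i) (y i)) = 0 → ∀ i ≤ n, y i = 0 := by
  intro n
  induction n with
  | zero =>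
    intro y hy hsum i hi
    interval_cases i
    simpa [shPow] using hsum
  | succ n ih =>
    intro y hy hsum i hi
    have hD : (∑ i ∈ Finset.range (n + 1), Shl (shPow x i) ((i+1) • y (i+1))) = 0 := by
      have h0 := congrArg D hsum
      rw [map_sum, map_zero] at h0
      calc (∑ i ∈ Finset.range (n + 1), Shl (shPow x i) ((i+1) • y (i+1)))
          = ∑ i ∈ Finset.range (n + 1), D (Shl (shPow x (i+1)) (y (i+1))) := by
            apply Finset.sum_congr rfl
            intro i _
            rw [hder, hy, D_shPow_unit D hder x hx,
              ← Nat.cast_smul_eq_nsmul ℂ, ← Nat.cast_smul_eq_nsmul ℂ]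
            simp [map_smul]
        _ = ∑ i ∈ Finset.range (n + 2), D (Shl (shPow x i) (y i)) := by
            rw [Finset.sum_range_succ' (fun i => D (Shl (shPow x i) (y i))) (n+1)]
            have : D (Shl (shPow x 0) (y 0)) = 0 := by
              rw [show shPow x 0 = unitS from rfl, Shl_unit_left, hy]
            rw [this, add_zero]
        _ = 0 := h0
    have hsucc : ∀ i ≤ n, y (i + 1) = 0 := by
      intro i hi'
      have h1 := ih (fun i => (i+1) • y (i+1)) (fun i => by simp [hy]) hD i hi'
      have h1' : (i+1) • y (i+1) = 0 := h1
      have h2 : ((i : ℂ) + 1) • y (i+1) = 0 := by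
        rw [← Nat.cast_smul_eq_nsmul ℂ] at h1'
        simpa using h1'
      have h3 : ((i : ℂ) + 1) ≠ 0 := Nat.cast_add_one_ne_zero i
      simpa [h3] using smul_eq_zero.mp h2
    cases i with
    | zero =>
      have : (∑ i ∈ Finset.range (n + 2), Shl (shPow x i) (y i)) = y 0 := by
        rw [Finset.sum_range_succ' (fun i => Shl (shPow x i) (y i)) (n+1)]
        have hz : ∀ j ∈ Finset.range (n+1), Shl (shPow x (j+1)) (y (j+1)) = 0 := by
          intro j hj
          rw [hsucc j (Nat.lt_succ_iff.mp (Finset.mem_range.mp hj)), map_zero]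
        rw [Finset.sum_congr rfl hz]
        simp [shPow]
      rw [this] at hsum
      exact hsum
    | succ i => exact hsucc i (by omega)

lemma cancel_right (D : S →ₗ[ℂ] S)
    (hder : ∀ f g, D (Shl f g) = Shl (D f) g + Shl f (D g))
    (x : S) (hx : D x = unitS) :
    ∀ (n : ℕ) (y : ℕ → S), (∀ i, D (y i) = 0) →
      (∑ i ∈ Finset.range (n + 1), Shl (y i) (shPow x i)) = 0 → ∀ i ≤ n, y i = 0 := by
  intro n y hy hsum
  apply cancel_left D hder x hx n y hy
  rw [← hsum]
  exact Finset.sum_congr rfl fun i _ => Shl_comm _ _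

lemma uniq_zero (c : ℕ × ℕ →₀ S) (hc : ∀ p, c p ∈ S10)
    (h : (c.sum fun p w => Shl (shPow x1 p.1) (Shl w (shPow x0 p.2))) = 0) : c = 0 := by
  set M := c.support.sup (fun p => max p.1 p.2) with hM
  have hsub : c.support ⊆ Finset.range (M+1) ×ˢ Finset.range (M+1) := by
    intro p hp
    have hle : max p.1 p.2 ≤ M := Finset.le_sup (f := fun p : ℕ × ℕ => max p.1 p.2) hp
    simp only [Finset.mem_product, Finset.mem_range]
    constructor <;> omega
  rw [Finsupp.sum_of_support_subset c hsub _ (fun p _ => by simp)] at h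
  rw [Finset.sum_product] at h
  set y : ℕ → S := fun i => ∑ j ∈ Finset.range (M+1), Shl (c (i,j)) (shPow x0 j) with hy
  have h' : (∑ i ∈ Finset.range (M+1), Shl (shPow x1 i) (y i)) = 0 := by
    rw [← h]
    apply Finset.sum_congr rfl
    intro i _
    rw [hy, map_sum]
  have hyD : ∀ i, dH true (y i) = 0 := by
    intro i
    rw [hy]
    simp only [map_sum]
    apply Finset.sum_eq_zero
    intro j _
    rw [dH_Shl, dH_true_of_S10 _ (hc (i,j)),
      D_shPow_zero (dH true) (dH_Shl true) x0 dH_true_x0 j]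
    simp
  have hyz := cancel_left (dH true) (dH_Shl true) x1 dH_x1 M y hyD h'
  have hcz : ∀ i ≤ M, ∀ j ≤ M, c (i, j) = 0 := by
    intro i hi
    have := hyz i hi
    rw [hy] at this
    exact cancel_right dT dT_Shl x0 dT_x0 M (fun j => c (i, j))
      (fun j => dT_of_S10 _ (hc (i, j))) this
  ext p
  by_cases hp : p ∈ c.support
  · have := hsub hp
    simp only [Finset.mem_product, Finset.mem_range] at this
    have h0 := hcz p.1 (by omega) p.2 (by omega)
    rw [show ((p.1, p.2) : ℕ × ℕ) = p from rfl] at h0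
    rw [h0]
    rfl
  · rw [Finsupp.notMem_support_iff.mp hp]
    rfl

open Finsupp

abbrev rep (b : Bool) (i : ℕ) : List Bool := List.replicate i b

@[simp] lemma lead_rep (b : Bool) (i : ℕ) : lead b (rep b i) = i := by
  induction i with
  | zero => simp
  | succ i ih => rw [show rep b (i+1) = b :: rep b i from rfl]; simpa using ih

lemma lead_rep_append (b : Bool) (i : ℕ) (t : List Bool) :
    lead b (rep b i ++ t) = i + lead b t := by
  induction i with
  | zero => simp
  | succ i ih => rw [show rep b (i+1) = b :: rep b i from rfl, List.cons_append, lead_cons_self, ih]; omega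

lemma lead_le_length (b : Bool) (w : List Bool) : lead b w ≤ w.length := by
  induction w with
  | nil => simp
  | cons a t ih => rw [lead_cons]; split <;> simp <;> omega

lemma lead_eq_zero_iff (b : Bool) (w : List Bool) : lead b w = 0 ↔ w.head? ≠ some b := by
  cases w with
  | nil => simp
  | cons a t =>
    rw [lead_cons]
    by_cases h : a = b <;> simp [h]

def trail (b : Bool) (w : List Bool) : ℕ := lead b w.reverse

lemma trail_eq_zero_iff (b : Bool) (w : List Bool) : trail b w = 0 ↔ w.getLast? ≠ some b := by
  rw [trail, lead_eq_zero_iff, List.head?_reverse]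

lemma sh_trail {b : Bool} {u v w : List Bool} (h : w ∈ (sh u v).support) :
    trail b w ≤ trail b u + trail b v := by
  have hrev : w.reverse ∈ (sh u.reverse v.reverse).support := by
    rw [← sh_reverse]
    rw [Finsupp.mapDomain_support_of_injective List.reverse_injective]
    exact Finset.mem_image_of_mem _ h
  exact sh_lead hrev

/-- structure of the shuffle of a block of `b`'s with a word not starting with `b` -/
lemma head_struct (b : Bool) (i : ℕ) (t : List Bool) (h : lead b t = 0) :
    (sh (rep b i) t) (rep b i ++ t) = 1 ∧
      ∀ w ∈ (sh (rep b i) t).support, lead b w = i → w = rep b i ++ t := by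
  induction i generalizing t with
  | zero =>
    rw [show rep b 0 = [] from rfl, sh_nil_left]
    constructor
    · simp
    · intro w hw _
      have := Finsupp.support_single_subset hw
      simp_all
  | succ i ih =>
    cases t with
    | nil =>
      rw [sh_nil_right]
      constructor
      · simp
      · intro w hw _
        have := Finsupp.support_single_subset hw
        simp_all
    | cons c t' =>
      have hcb : c ≠ b := by
        rw [lead_eq_zero_iff] at h
        simp only [List.head?_cons, ne_eq, Option.some.injEq] at h
        exact h
      rw [show rep b (i+1) = b :: rep b i from rfl, sh_cons_cons]
      have hinj : Function.Injective (fun w : List Bool => b :: w) := fun x y hxy => by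
        simpa using hxy
      have hinjc : Function.Injective (fun w : List Bool => c :: w) := fun x y hxy => by
        simpa using hxy
      obtain ⟨ih1, ih2⟩ := ih (c :: t') h
      constructor
      · rw [Finsupp.add_apply]
        have e1 : (Finsupp.mapDomain (b :: ·) (sh (rep b i) (c :: t')))
            (b :: (rep b i ++ c :: t')) = 1 := by
          rw [Finsupp.mapDomain_apply hinj]
          exact ih1
        have e2 : (Finsupp.mapDomain (c :: ·) (sh (b :: rep b i) t'))
            (b :: (rep b i ++ c :: t')) = 0 := by
          rw [← Finsupp.notMem_support_iff]
          intro hmem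
          have := Finsupp.mapDomain_support hmem
          simp only [Finset.mem_image] at this
          obtain ⟨w', _, hw'⟩ := this
          simp at hw'
          exact hcb hw'.1
        rw [List.cons_append, e1, e2]
        norm_num
      · intro w hw hlw
        have := Finsupp.support_add hw
        simp only [Finset.mem_union] at this
        rcases this with hmem | hmem
        · have := Finsupp.mapDomain_support hmem
          simp only [Finset.mem_image] at this
          obtain ⟨w', hw', rfl⟩ := this
          have hl : lead b w' = i := by
            have : lead b (b :: w') = lead b w' + 1 := lead_cons_self b w'
            omega
          have := ih2 w' hw' hl
          rw [this]
          rfl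
        · have := Finsupp.mapDomain_support hmem
          simp only [Finset.mem_image] at this
          obtain ⟨w', _, rfl⟩ := this
          rw [lead_cons_ne b c w' hcb] at hlw
          omega

lemma head_decomp (b : Bool) (i : ℕ) (t : List Bool) (h : lead b t = 0) :
    ∃ R : S, sh (rep b i) t = Finsupp.single (rep b i ++ t) 1 + R ∧
      ∀ w ∈ R.support, w ∈ (sh (rep b i) t).support ∧ lead b w < i := by
  obtain ⟨h1, h2⟩ := head_struct b i t h
  refine ⟨sh (rep b i) t - Finsupp.single (rep b i ++ t) 1, by abel, ?_⟩
  intro w hw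
  have hne : w ≠ rep b i ++ t := by
    rintro rfl
    rw [Finsupp.mem_support_iff, Finsupp.sub_apply, h1, Finsupp.single_eq_same] at hw
    exact hw (by ring)
  have hsub : w ∈ (sh (rep b i) t).support := by
    have h3 := Finsupp.support_sub (f := sh (rep b i) t) (g := Finsupp.single (rep b i ++ t) 1) hw
    simp only [Finset.mem_union] at h3
    rcases h3 with h3 | h3
    · exact h3
    · exact absurd (Finsupp.support_single_subset h3) (by simpa using hne)
  refine ⟨hsub, ?_⟩
  have hle := sh_lead (b := b) hsub
  rw [lead_rep, h] at hle
  rcases Nat.lt_or_ge (lead b w) i with hlt | hge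
  · exact hlt
  · exact absurd (h2 w hsub (by omega)) hne

lemma tail_decomp (b : Bool) (j : ℕ) (t : List Bool) (h : trail b t = 0) :
    ∃ R : S, sh t (rep b j) = Finsupp.single (t ++ rep b j) 1 + R ∧
      ∀ w ∈ R.support, w ∈ (sh t (rep b j)).support ∧ trail b w < j := by
  obtain ⟨R, hR, hRs⟩ := head_decomp b j t.reverse h
  refine ⟨revL R, ?_, ?_⟩
  · have : sh t (rep b j) = revL (sh (rep b j) t.reverse) := by
      rw [show revL (sh (rep b j) t.reverse) = (sh (rep b j) t.reverse).mapDomain List.reverse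
        from rfl, sh_reverse, List.reverse_replicate, List.reverse_reverse, sh_comm]
    rw [this, hR, map_add, revL_single]
    congr 2
    rw [List.reverse_append, List.reverse_reverse, List.reverse_replicate]
  · intro w hw
    rw [show revL R = R.mapDomain List.reverse from rfl,
      Finsupp.mapDomain_support_of_injective List.reverse_injective] at hw
    simp only [Finset.mem_image] at hw
    obtain ⟨w0, hw0, rfl⟩ := hw
    obtain ⟨hmem, hlead⟩ := hRs w0 hw0
    constructor
    · rw [sh_comm t (rep b j), show (sh (rep b j) t).support
        = ((sh (rep b j) t.reverse).mapDomain List.reverse).support from by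
          rw [sh_reverse, List.reverse_replicate, List.reverse_reverse],
        Finsupp.mapDomain_support_of_injective List.reverse_injective]
      exact Finset.mem_image_of_mem _ hmem
    · rw [trail, List.reverse_reverse]
      exact hlead

open Finsupp

lemma lead_dropWhile (b : Bool) (w : List Bool) :
    lead b (List.dropWhile (· == b) w) = 0 := by
  induction w with
  | nil => simp
  | cons a t ih =>
    rw [List.dropWhile_cons]
    split
    · exact ih
    · next h => rw [lead_cons]; simp_all

lemma lead_split (b : Bool) (w : List Bool) :
    w = rep b (lead b w) ++ List.dropWhile (· == b) w := by
  have h1 : List.takeWhile (· == b) w = rep b (lead b w) := by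
    rw [List.eq_replicate_iff]
    refine ⟨rfl, ?_⟩
    intro x hx
    have := List.mem_takeWhile_imp hx
    simpa using this
  conv_lhs => rw [← List.takeWhile_append_dropWhile (p := (· == b)) (l := w)]
  rw [h1]

lemma trail_append_rep (b : Bool) (j : ℕ) (x : List Bool) :
    trail b (x ++ rep b j) = j + trail b x := by
  rw [trail, List.reverse_append, List.reverse_replicate, lead_rep_append, trail]

lemma trail_split (b : Bool) (t : List Bool) :
    t = (List.dropWhile (· == b) t.reverse).reverse ++ rep b (trail b t) ∧
      trail b ((List.dropWhile (· == b) t.reverse).reverse) = 0 := by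
  constructor
  · conv_lhs => rw [← List.reverse_reverse t]
    conv_lhs => rw [lead_split b t.reverse]
    rw [List.reverse_append, List.reverse_replicate]
    rfl
  · rw [trail, List.reverse_reverse]
    exact lead_dropWhile b t.reverse

lemma meas_lt {L j i tr ld : ℕ} (htr : tr ≤ j) (hld : ld ≤ L) (h : tr = j → ld < i) :
    tr * (L + 1) + ld < j * (L + 1) + i := by
  rcases eq_or_lt_of_le htr with rfl | h2
  · exact Nat.add_lt_add_left (h rfl) _
  · have h3 : tr * (L+1) + ld < (tr + 1) * (L + 1) := by
      rw [add_mul, one_mul]; omega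
    have h4 : (tr + 1) * (L + 1) ≤ j * (L + 1) := Nat.mul_le_mul_right _ h2
    omega

def Φ : ((ℕ × ℕ) →₀ S) →ₗ[ℂ] S :=
  Finsupp.lsum ℂ fun p => (Shl (shPow x1 p.1)) ∘ₗ (LinearMap.flip Shl (shPow x0 p.2))

lemma Φ_single (p : ℕ × ℕ) (w : S) :
    Φ (Finsupp.single p w) = Shl (shPow x1 p.1) (Shl w (shPow x0 p.2)) := by
  simp [Φ]

lemma Φ_apply (c : (ℕ × ℕ) →₀ S) :
    Φ c = c.sum fun p w => Shl (shPow x1 p.1) (Shl w (shPow x0 p.2)) := by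
  rw [Φ, Finsupp.lsum_apply]
  rfl

def E : Submodule ℂ S where
  carrier := {u | ∃ c : (ℕ × ℕ) →₀ S, (∀ p, c p ∈ S10) ∧ Φ c = u}
  add_mem' := by
    rintro u v ⟨c, hc, rfl⟩ ⟨c', hc', rfl⟩
    exact ⟨c + c', fun p => by rw [Finsupp.add_apply]; exact add_mem (hc p) (hc' p),
      by rw [map_add]⟩
  zero_mem' := ⟨0, fun p => by simp, map_zero Φ⟩
  smul_mem' := by
    rintro a u ⟨c, hc, rfl⟩
    exact ⟨a • c, fun p => by rw [Finsupp.smul_apply]; exact Submodule.smul_mem S10 a (hc p),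
      map_smul Φ a c⟩

lemma eq_sum_single_smul (f : S) :
    f = ∑ w ∈ f.support, f w • Finsupp.single w (1:ℂ) := by
  conv_lhs => rw [← Finsupp.sum_single f]
  rw [Finsupp.sum]
  apply Finset.sum_congr rfl
  intro w _
  rw [Finsupp.smul_single, smul_eq_mul, mul_one]

lemma mem_E_of_support (f : S) (h : ∀ w ∈ f.support, Finsupp.single w (1:ℂ) ∈ E) : f ∈ E := by
  rw [eq_sum_single_smul f]
  exact Submodule.sum_mem E fun w hw => Submodule.smul_mem E _ (h w hw)

lemma sh_rep_cons (b : Bool) (n : ℕ) :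
    sh [b] (rep b n) = ((n : ℂ) + 1) • Finsupp.single (rep b (n+1)) 1 := by
  induction n with
  | zero => rw [show rep b 0 = ([] : List Bool) from rfl, sh_nil_right]; simp
  | succ n ih =>
    rw [show rep b (n+1) = b :: rep b n from rfl, sh_cons_cons, sh_nil_left, ih,
      Finsupp.mapDomain_single, Finsupp.mapDomain_smul, Finsupp.mapDomain_single]
    rw [show (b :: b :: rep b n : List Bool) = rep b (n+2) from rfl,
      show (b :: rep b (n+1) : List Bool) = rep b (n+2) from rfl]
    rw [show ((n+1:ℕ):ℂ) = ((n:ℂ) + 1) from by push_cast; ring,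
      show rep b (n+1+1) = rep b (n+2) from rfl]
    rw [add_smul ((n:ℂ)+1) 1, one_smul]
    exact add_comm _ _

lemma shPow_rep (b : Bool) (n : ℕ) :
    shPow (Finsupp.single [b] 1) n = (n.factorial : ℂ) • Finsupp.single (rep b n) 1 := by
  induction n with
  | zero => rw [shPow]; simp
  | succ n ih =>
    rw [shPow_succ', ih, map_smul, Shl_single_single, one_mul, one_smul, sh_rep_cons, smul_smul]
    congr 1
    rw [Nat.factorial_succ]
    push_cast
    ring

open Finsupp

lemma getLast?_rep_ne_false (b : Bool) (i : ℕ) (hb : b = true ∨ i = 0) :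
    (rep b i).getLast? ≠ some false := by
  rw [← List.head?_reverse, List.reverse_replicate]
  cases i with
  | zero => simp
  | succ n =>
    rcases hb with rfl | h
    · simp [rep, List.replicate_succ]
    · omega

lemma single_mem_E_aux : ∀ n : ℕ, ∀ w : List Bool,
    trail false w * (w.length + 1) + lead true w ≤ n → Finsupp.single w (1:ℂ) ∈ E := by
  intro n
  induction n using Nat.strong_induction_on with
  | _ n ih =>
    intro w hn
    set i := lead true w with hi
    set t := List.dropWhile (· == true) w with ht
    have hw : w = rep true i ++ t := lead_split true w
    have ht0 : lead true t = 0 := lead_dropWhile true w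
    set j := trail false t with hj
    set core := (List.dropWhile (· == false) t.reverse).reverse with hcore
    obtain ⟨htc, hcore0⟩ := trail_split false t
    rw [← hcore] at htc hcore0
    rw [← hj] at htc
    -- core is in S10words
    have hcore10 : core ∈ S10words := by
      cases hc : core with
      | nil => exact Or.inl rfl
      | cons a c' =>
        refine Or.inr ⟨?_, ?_⟩
        · -- head of core is head of t, and t does not start with true
          have hth : t.head? = some a := by
            rw [htc, hc]
            rfl
          have : t.head? ≠ some true := by
            rw [← lead_eq_zero_iff] at *
            exact ht0
          cases a
          · rfl
          · rw [hth] at this; exact absurd rfl this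
        · -- last of core is not false and core nonempty
          rw [← hc]
          have h1 : core.getLast? ≠ some false := by
            rw [← trail_eq_zero_iff]
            exact hcore0
          cases hlast : core.getLast? with
          | none =>
            rw [List.getLast?_eq_none_iff] at hlast
            rw [hlast] at hc
            exact absurd hc (by simp)
          | some x =>
            cases x
            · exact absurd hlast h1
            · rfl
    -- further numeric facts
    have hLt : t.length = core.length + j := by
      rw [htc]; simp
    have hLw : w.length = i + t.length := by
      rw [hw]; simp
    have htrailw : trail false w = j := by
      rw [hw, htc, ← List.append_assoc, trail_append_rep]
      have : trail false (rep true i ++ core) = 0 := by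
        rw [trail_eq_zero_iff]
        cases hc : core with
        | nil =>
          rw [List.append_nil]
          exact getLast?_rep_ne_false true i (Or.inl rfl)
        | cons a c' =>
          rw [List.getLast?_append_cons, ← hc]
          rw [← trail_eq_zero_iff]
          exact hcore0
      rw [this]
      omega
    -- decompositions
    obtain ⟨R1, hR1, hR1s⟩ := tail_decomp false j core hcore0
    obtain ⟨R2, hR2, hR2s⟩ := head_decomp true i t ht0
    rw [← htc] at hR1
    rw [← hw] at hR2
    -- the key identity
    have e1 : Shl (Finsupp.single core (1:ℂ)) (shPow x0 j)
        = (j.factorial : ℂ) • (Finsupp.single t 1 + R1) := by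
      rw [show shPow x0 j = (j.factorial : ℂ) • Finsupp.single (rep false j) 1
          from shPow_rep false j,
        map_smul, Shl_single_single, one_mul, one_smul, hR1]
    have e2 : Φ (Finsupp.single (i,j) (Finsupp.single core (1:ℂ)))
        = ((i.factorial : ℂ) * j.factorial)
            • (Finsupp.single w 1 + R2 + Shl (Finsupp.single (rep true i) 1) R1) := by
      rw [Φ_single]
      rw [show ((i,j) : ℕ × ℕ).1 = i from rfl, show ((i,j) : ℕ × ℕ).2 = j from rfl, e1,
        map_smul, show shPow x1 i = (i.factorial : ℂ) • Finsupp.single (rep true i) 1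
          from shPow_rep true i]
      simp only [map_smul, LinearMap.smul_apply]
      rw [map_add (Shl (Finsupp.single (rep true i) 1)), Shl_single_single, one_mul, one_smul,
        hR2, smul_smul, mul_comm (j.factorial : ℂ) (i.factorial : ℂ)]
    have hfac : ((i.factorial : ℂ) * j.factorial) ≠ 0 :=
      mul_ne_zero (Nat.cast_ne_zero.mpr (Nat.factorial_ne_zero i))
        (Nat.cast_ne_zero.mpr (Nat.factorial_ne_zero j))
    -- memberships
    have hmem1 : Φ (Finsupp.single (i,j) (Finsupp.single core (1:ℂ))) ∈ E := by
      refine ⟨Finsupp.single (i,j) (Finsupp.single core (1:ℂ)), ?_, rfl⟩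
      intro p
      rw [Finsupp.single_apply]
      split
      · rw [S10, Finsupp.mem_supported]
        intro x hx
        have := Finsupp.support_single_subset hx
        simp only [Finset.mem_singleton] at this
        rw [this]
        exact hcore10
      · exact zero_mem S10
    have hR2mem : R2 ∈ E := by
      apply mem_E_of_support
      intro w' hw'
      obtain ⟨hmem', hlead'⟩ := hR2s w' hw'
      have hlen' : w'.length = w.length := by
        have := sh_length hmem'
        simp only [List.length_replicate] at this
        omega
      have htr' : trail false w' ≤ j := by
        have h1 := sh_trail (b := false) hmem'
        have h2 : trail false (rep true i) = 0 := by
          rw [trail_eq_zero_iff]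
          exact getLast?_rep_ne_false true i (Or.inl rfl)
        rw [h2, ← hj] at h1
        omega
      have hmeas : trail false w' * (w'.length + 1) + lead true w' <
          trail false w * (w.length + 1) + lead true w := by
        rw [htrailw, hlen', ← hi]
        exact meas_lt htr' (by rw [← hlen']; exact lead_le_length true w') (fun _ => hlead')
      exact ih _ (by omega) w' le_rfl
    have hShlR1mem : Shl (Finsupp.single (rep true i) (1:ℂ)) R1 ∈ E := by
      rw [eq_sum_single_smul R1, map_sum]
      apply Submodule.sum_mem
      intro w1 hw1
      rw [map_smul]
      apply Submodule.smul_mem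
      rw [Shl_single_single, one_mul, one_smul]
      obtain ⟨hmem1', htr1⟩ := hR1s w1 hw1
      have hlen1 : w1.length = core.length + j := by
        have := sh_length hmem1'
        simp only [List.length_replicate] at this
        omega
      apply mem_E_of_support
      intro w'' hw''
      have hlen'' : w''.length = w.length := by
        have := sh_length hw''
        simp only [List.length_replicate] at this
        omega
      have htr'' : trail false w'' < j := by
        have h1 := sh_trail (b := false) hw''
        have h2 : trail false (rep true i) = 0 := by
          rw [trail_eq_zero_iff]
          exact getLast?_rep_ne_false true i (Or.inl rfl)
        rw [h2] at h1
        omega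
      have hmeas : trail false w'' * (w''.length + 1) + lead true w'' <
          trail false w * (w.length + 1) + lead true w := by
        rw [htrailw, hlen'', ← hi]
        exact meas_lt (le_of_lt htr'') (by rw [← hlen'']; exact lead_le_length true w'')
          (fun heq => by omega)
      exact ih _ (by omega) w'' le_rfl
    -- assemble
    have heq : Finsupp.single w (1:ℂ)
        = ((i.factorial : ℂ) * j.factorial)⁻¹
            • Φ (Finsupp.single (i,j) (Finsupp.single core (1:ℂ)))
          - R2 - Shl (Finsupp.single (rep true i) 1) R1 := by
      rw [e2, smul_smul, inv_mul_cancel₀ hfac, one_smul]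
      abel
    rw [heq]
    exact sub_mem (sub_mem (Submodule.smul_mem E _ hmem1) hR2mem) hShlR1mem

lemma mem_E_all (u : S) : u ∈ E :=
  mem_E_of_support u fun w _ =>
    single_mem_E_aux (trail false w * (w.length + 1) + lead true w) w le_rfl

/-- S = S^{10}[ξ_1, ξ_0] — every element u of the shuffle algebra S
is uniquely a finite sum u = Σ_{i,j} ξ_1^{⧢i} ⧢ w_{ij} ⧢ ξ_0^{⧢j} with w_{ij} ∈ S^{10}. -/
theorem shuffle_decomposition_S10 (u : List Bool →₀ ℂ) :
    ∃! c : ℕ × ℕ →₀ (List Bool →₀ ℂ),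
      (∀ p, c p ∈ S10) ∧
      u = c.sum fun p w =>
        shProd (shPow (Finsupp.single [true] 1) p.1)
          (shProd w (shPow (Finsupp.single [false] 1) p.2)) := by
  have hsum : ∀ c : ℕ × ℕ →₀ (List Bool →₀ ℂ),
      (c.sum fun p w => shProd (shPow (Finsupp.single [true] 1) p.1)
        (shProd w (shPow (Finsupp.single [false] 1) p.2))) = Φ c := by
    intro c
    rw [Φ_apply]
    apply Finsupp.sum_congr
    intro p _
    rw [shProd_eq, shProd_eq]
  obtain ⟨c, hc, hΦc⟩ := mem_E_all u
  refine ⟨c, ⟨hc, by rw [hsum, hΦc]⟩, ?_⟩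
  rintro c' ⟨hc', hu'⟩
  have hz : ((c' - c).sum fun p w => Shl (shPow x1 p.1) (Shl w (shPow x0 p.2))) = 0 := by
    rw [← Φ_apply, show Φ (c' - c) = Φ c' - Φ c from map_sub Φ c' c, ← hsum c', ← hu', hΦc]
    exact sub_self u
  have h10 : ∀ p, (c' - c) p ∈ S10 := fun p => by
    rw [Finsupp.sub_apply]; exact sub_mem (hc' p) (hc p)
  have hzz := uniq_zero (c' - c) h10 hz
  exact sub_eq_zero.mp hzz
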